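/- arXiv:2312.10883 — 6 statements merged into one kernel-verified Lean document; each statement's English description precedes it below -/
import Mathlib

section
/- Let Y_N be F_N-measurable and g = {g_n} a sequence of F_{n-1}⊗B(R^d)-measurable functions g_n: Ω × R^d → R. Then there exist a unique adapted process {Y_n}_{n=0,...,N-1} and a unique R^d-valued predictable process {Z_n}_{n=1,...,N} such that Y_n - Y_{n-1} = -g_n(Z_n) + Z_n^T ΔX_n for n = 1,...,N. -/
open scoped Classical BigOperators
open Matrix

noncomputable section

/-- Path space: `N` steps, each increment indexed by `Fin (d+1)` (the increment at
step `n` being `v_{ω n}`). -/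
abbrev PathSp (N d : ℕ) := Fin N → Fin (d + 1)

/-- Two paths agree on the first `n` coordinates. -/
def agreeOn {N d : ℕ} (n : ℕ) (ω ω' : PathSp N d) : Prop :=
  ∀ k : Fin N, (k : ℕ) < n → ω k = ω' k

/-- A function of the path is `F_n`-measurable: it depends only on the first `n`
coordinates. -/
def MeasUpTo {N d : ℕ} {α : Type*} (n : ℕ) (f : PathSp N d → α) : Prop :=
  ∀ ω ω', agreeOn n ω ω' → f ω = f ω'

/-- Sum of `P ω' * f ω'` over the `F_n`-cylinder of `ω`. -/
def cylSum {N d : ℕ} (P : PathSp N d → ℝ) (n : ℕ) (f : PathSp N d → ℝ)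
    (ω : PathSp N d) : ℝ :=
  ∑ ω' : PathSp N d, if agreeOn n ω ω' then P ω' * f ω' else 0

/-- Elementary conditional expectation of `f` given the first `n` coordinates,
under the probability mass function `P`. -/
def cExp {N d : ℕ} (P : PathSp N d → ℝ) (n : ℕ) (f : PathSp N d → ℝ)
    (ω : PathSp N d) : ℝ :=
  cylSum P n f ω / cylSum P n (fun _ => 1) ω

lemma affine_unique {d : ℕ} (v : Fin d → Fin d → ℝ)
    (hspan : Submodule.span ℝ (Set.range v) = ⊤)
    (w : Fin (d + 1) → (Fin d → ℝ))
    (hw0 : w 0 = -(∑ k, v k)) (hws : ∀ k : Fin d, w k.succ = v k)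
    (f : Fin (d + 1) → ℝ) :
    ∃! cz : ℝ × (Fin d → ℝ), ∀ j, f j = cz.1 + ∑ k, cz.2 k * w j k := by
  have hwsum : ∀ k : Fin d, ∑ j, w j k = 0 := by
    intro k
    rw [Fin.sum_univ_succ]
    simp only [hw0, hws, Pi.neg_apply, Finset.sum_apply]
    ring
  let T : (ℝ × (Fin d → ℝ)) →ₗ[ℝ] (Fin (d + 1) → ℝ) :=
    { toFun := fun cz j => cz.1 + ∑ k, cz.2 k * w j k
      map_add' := by
        intro a b; funext j
        simp [add_mul, Finset.sum_add_distrib]; ring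
      map_smul' := by
        intro c a; funext j
        simp [Finset.mul_sum, mul_add, mul_assoc] }
  have hinj : Function.Injective T := by
    rw [← LinearMap.ker_eq_bot, LinearMap.ker_eq_bot']
    intro cz hcz
    have hz : ∀ j, cz.1 + ∑ k, cz.2 k * w j k = 0 := fun j => congrFun hcz j
    have hc : cz.1 = 0 := by
      have hsum : ∑ j, (cz.1 + ∑ k, cz.2 k * w j k) = 0 := by
        simp [hz]
      rw [Finset.sum_add_distrib, Finset.sum_const, Finset.sum_comm] at hsum
      have : ∀ k : Fin d, ∑ j, cz.2 k * w j k = 0 := by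
        intro k; rw [← Finset.mul_sum, hwsum k, mul_zero]
      simp only [this, Finset.sum_const_zero, add_zero, Finset.card_univ,
        Fintype.card_fin, nsmul_eq_mul] at hsum
      have : ((d+1 : ℕ) : ℝ) ≠ 0 := by positivity
      exact (mul_eq_zero.mp hsum).resolve_left this
    have hZv : ∀ k : Fin d, ∑ i, cz.2 i * v k i = 0 := by
      intro k
      have := hz k.succ
      rw [hc, hws k, zero_add] at this
      exact this
    have hZ : cz.2 = 0 := by
      let φ : (Fin d → ℝ) →ₗ[ℝ] ℝ :=
        { toFun := fun u => ∑ i, cz.2 i * u i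
          map_add' := by intro a b; simp [mul_add, Finset.sum_add_distrib]
          map_smul' := by intro c a; simp [Finset.mul_sum, mul_left_comm] }
      have hφ : φ = 0 := by
        apply LinearMap.ext_on hspan
        rintro x ⟨k, rfl⟩
        exact hZv k
      funext i
      have := congrFun (congrArg DFunLike.coe hφ) (Pi.single i 1)
      simpa [φ, Pi.single_apply, mul_comm] using this
    exact Prod.ext hc hZ
  have hfr : Module.finrank ℝ (ℝ × (Fin d → ℝ)) = Module.finrank ℝ (Fin (d + 1) → ℝ) := by
    simp [Module.finrank_prod]
    ring
  have hsurj : Function.Surjective T :=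
    (LinearMap.injective_iff_surjective_of_finrank_eq_finrank hfr).mp hinj
  obtain ⟨cz, hcz⟩ := hsurj f
  refine ⟨cz, ?_, ?_⟩
  · intro j; exact (congrFun hcz j).symm
  · intro cz' h'
    apply hinj
    rw [hcz]
    funext j
    exact (h' j).symm

/-- Backward recursion for the BSΔE value process: `bA sol g Yterm j` is `Y_{N-j}`. -/
def bA {N d : ℕ} (sol : (Fin (d + 1) → ℝ) → ℝ × (Fin d → ℝ))
    (g : Fin N → PathSp N d → (Fin d → ℝ) → ℝ) (Yterm : PathSp N d → ℝ) :
    ℕ → PathSp N d → ℝ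
  | 0 => Yterm
  | (j + 1) => fun ω =>
      if h : j < N then
        ((sol fun i => bA sol g Yterm j (Function.update ω ⟨N - 1 - j, by omega⟩ i)).1)
          + g ⟨N - 1 - j, by omega⟩ ω
            (sol fun i => bA sol g Yterm j (Function.update ω ⟨N - 1 - j, by omega⟩ i)).2
      else 0

/-- existence and uniqueness of the BSΔE solution: given an
`F_N`-measurable terminal value and drivers `g_n` that are `F_{n-1}`-measurable,
there is a unique adapted `{Y_n}` and predictable `{Z_n}` with
`ΔY_n = -g_n(Z_n) + Z_nᵀ ΔX_n` and `Y_N` the given terminal value. -/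
theorem stmt7 (N d : ℕ) (v : Fin d → (Fin d → ℝ)) (hv : LinearIndependent ℝ v)
    (hspan : Submodule.span ℝ (Set.range v) = ⊤)
    (w : Fin (d + 1) → (Fin d → ℝ))
    (hw0 : w 0 = -(∑ k, v k)) (hws : ∀ k : Fin d, w k.succ = v k)
    (g : Fin N → PathSp N d → (Fin d → ℝ) → ℝ)
    (hg : ∀ (n : Fin N) (z : Fin d → ℝ), MeasUpTo (n : ℕ) (fun ω => g n ω z))
    (Yterm : PathSp N d → ℝ) :
    ∃! YZ : (Fin (N + 1) → PathSp N d → ℝ) × (Fin N → PathSp N d → (Fin d → ℝ)),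
      (∀ n : Fin (N + 1), MeasUpTo (n : ℕ) (YZ.1 n)) ∧
      (∀ n : Fin N, MeasUpTo (n : ℕ) (YZ.2 n)) ∧
      YZ.1 (Fin.last N) = Yterm ∧
      ∀ (n : Fin N) (ω : PathSp N d),
        YZ.1 n.succ ω - YZ.1 n.castSucc ω
          = -(g n ω (YZ.2 n ω)) + ∑ k, YZ.2 n ω k * w (ω n) k := by
  have key := affine_unique v hspan w hw0 hws
  set sol : (Fin (d + 1) → ℝ) → ℝ × (Fin d → ℝ) := fun f => (key f).choose with hsoldef
  have hsol : ∀ f (j : Fin (d + 1)), f j = (sol f).1 + ∑ k, (sol f).2 k * w j k :=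
    fun f => (key f).choose_spec.1
  have husol : ∀ f (cz : ℝ × (Fin d → ℝ)),
      (∀ j, f j = cz.1 + ∑ k, cz.2 k * w j k) → cz = sol f :=
    fun f cz h => (key f).choose_spec.2 cz h
  set A : ℕ → PathSp N d → ℝ := bA sol g Yterm with hAdef
  have hA0 : A 0 = Yterm := rfl
  have hAstep : ∀ j, j < N → ∀ (n : Fin N), (n : ℕ) = N - 1 - j → ∀ ω,
      A (j + 1) ω = (sol fun i => A j (Function.update ω n i)).1
        + g n ω (sol fun i => A j (Function.update ω n i)).2 := by
    intro j h n hn ω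
    obtain ⟨nv, hlt⟩ := n
    simp only [Fin.val_mk] at hn
    subst hn
    simp [hAdef, bA, h]
  have hAstep2 : ∀ (n : Fin N) (ω : PathSp N d),
      A (N - (n : ℕ)) ω = (sol fun i => A (N - (n : ℕ) - 1) (Function.update ω n i)).1
        + g n ω (sol fun i => A (N - (n : ℕ) - 1) (Function.update ω n i)).2 := by
    intro n ω
    have hnN := n.isLt
    obtain ⟨j, hj⟩ : ∃ j, N - (n : ℕ) - 1 = j := ⟨_, rfl⟩
    have h2 : N - (n : ℕ) = j + 1 := by omega
    rw [hj, h2]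
    exact hAstep j (by omega) n (by omega) ω
  have measA : ∀ j, MeasUpTo (N - j) (A j) := by
    intro j
    induction j with
    | zero =>
      intro ω ω' hagree
      have : ω = ω' := funext fun k => hagree k (by omega)
      rw [this]
    | succ j ih =>
      intro ω ω' hagree
      by_cases h : j < N
      · rw [hAstep j h ⟨N - 1 - j, by omega⟩ rfl ω, hAstep j h ⟨N - 1 - j, by omega⟩ rfl ω']
        have hfeq : (fun i => A j (Function.update ω ⟨N - 1 - j, by omega⟩ i))
            = fun i => A j (Function.update ω' ⟨N - 1 - j, by omega⟩ i) := by
          funext i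
          apply ih
          intro k hk
          rcases eq_or_ne k ⟨N - 1 - j, by omega⟩ with hke | hne
          · rw [hke]; simp
          · have hkv : (k : ℕ) ≠ N - 1 - j := fun hh => hne (Fin.ext hh)
            rw [Function.update_of_ne hne, Function.update_of_ne hne]
            exact hagree k (by omega)
        rw [hfeq]
        have hag : agreeOn (N - 1 - j) ω ω' := fun k hk => hagree k (by omega)
        have hgeq : g ⟨N - 1 - j, by omega⟩ ω
              ((sol fun i => A j (Function.update ω' ⟨N - 1 - j, by omega⟩ i)).2)
            = g ⟨N - 1 - j, by omega⟩ ω'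
              ((sol fun i => A j (Function.update ω' ⟨N - 1 - j, by omega⟩ i)).2) :=
          hg ⟨N - 1 - j, by omega⟩ _ ω ω' hag
        rw [hgeq]
      · show bA sol g Yterm (j + 1) ω = bA sol g Yterm (j + 1) ω'
        simp [bA, h]
  refine ⟨⟨fun m ω => A (N - (m : ℕ)) ω,
      fun n ω => (sol fun i => A (N - (n : ℕ) - 1) (Function.update ω n i)).2⟩,
      ⟨?_, ?_, ?_, ?_⟩, ?_⟩
  · -- adaptedness of Y
    intro m
    have hm := m.isLt
    have h1 : N - (N - (m : ℕ)) = (m : ℕ) := by omega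
    have h2 := measA (N - (m : ℕ))
    rwa [h1] at h2
  · -- predictability of Z
    intro n ω ω' hag
    have hnN := n.isLt
    show (sol fun i => A (N - (n : ℕ) - 1) (Function.update ω n i)).2
        = (sol fun i => A (N - (n : ℕ) - 1) (Function.update ω' n i)).2
    have h1 : N - (N - (n : ℕ) - 1) = (n : ℕ) + 1 := by omega
    have h2 := measA (N - (n : ℕ) - 1)
    rw [h1] at h2
    have hfeq : (fun i => A (N - (n : ℕ) - 1) (Function.update ω n i))
        = fun i => A (N - (n : ℕ) - 1) (Function.update ω' n i) := by
      funext i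
      apply h2
      intro k hk
      rcases eq_or_ne k n with rfl | hne
      · simp
      · have hkv : (k : ℕ) ≠ (n : ℕ) := fun hh => hne (Fin.ext hh)
        rw [Function.update_of_ne hne, Function.update_of_ne hne]
        exact hag k (by omega)
    rw [hfeq]
  · -- terminal condition
    show (fun ω => A (N - ((Fin.last N : Fin (N + 1)) : ℕ)) ω) = Yterm
    simp only [Fin.val_last, Nat.sub_self]
    exact hA0
  · -- the BSΔE equation
    intro n ω
    have hnN := n.isLt
    show A (N - ((n.succ : Fin (N + 1)) : ℕ)) ω - A (N - ((n.castSucc : Fin (N + 1)) : ℕ)) ω = _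
    have e0 : N - ((n.succ : Fin (N + 1)) : ℕ) = N - (n : ℕ) - 1 := by
      simp [Fin.val_succ]; omega
    have e0' : N - ((n.castSucc : Fin (N + 1)) : ℕ) = N - (n : ℕ) := by
      simp [Fin.coe_castSucc]
    rw [e0, e0', hAstep2 n ω]
    have hs := hsol (fun i => A (N - (n : ℕ) - 1) (Function.update ω n i)) (ω n)
    simp only [Function.update_eq_self] at hs
    rw [hs]
    ring
  · -- uniqueness
    rintro ⟨Y', Z'⟩ ⟨hmY, hmZ, hterm, heqn⟩
    dsimp only at hmY hmZ hterm heqn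
    have core : ∀ (n : Fin N), Y' n.succ = A (N - (n : ℕ) - 1) → ∀ ω,
        Y' n.castSucc ω = A (N - (n : ℕ)) ω ∧
        Z' n ω = (sol fun i => A (N - (n : ℕ) - 1) (Function.update ω n i)).2 := by
      intro n hYs ω
      have hcz : ∀ i, A (N - (n : ℕ) - 1) (Function.update ω n i)
          = (Y' n.castSucc ω - g n ω (Z' n ω)) + ∑ k, Z' n ω k * w i k := by
        intro i
        have hag : agreeOn (n : ℕ) (Function.update ω n i) ω := by
          intro k hk
          have hne : k ≠ n := fun hh => by subst hh; omega
          rw [Function.update_of_ne hne]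
        have e1 := heqn n (Function.update ω n i)
        rw [hYs] at e1
        have e2 : Y' n.castSucc (Function.update ω n i) = Y' n.castSucc ω :=
          hmY n.castSucc _ _ (by intro k hk; exact hag k (by simpa using hk))
        have e3 : Z' n (Function.update ω n i) = Z' n ω := hmZ n _ _ hag
        have e4 : g n (Function.update ω n i) (Z' n ω) = g n ω (Z' n ω) :=
          hg n (Z' n ω) _ _ hag
        have e5 : (Function.update ω n i) n = i := Function.update_self n i ω
        rw [e2, e3, e5, e4] at e1
        linarith
      have huniq := husol _ (Y' n.castSucc ω - g n ω (Z' n ω), Z' n ω) hcz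
      have hc1 := congrArg Prod.fst huniq
      have hc2 := congrArg Prod.snd huniq
      simp only at hc1 hc2
      refine ⟨?_, hc2⟩
      rw [hAstep2 n ω, ← hc1, ← hc2]
      ring
    have coreY : ∀ j, j ≤ N → Y' ⟨N - j, by omega⟩ = A j := by
      intro j
      induction j with
      | zero =>
        intro _
        have h0 : (⟨N - 0, by omega⟩ : Fin (N + 1)) = Fin.last N := by
          ext; simp
        rw [h0, hterm]
        exact hA0.symm
      | succ j ih =>
        intro hjN
        have h : j < N := by omega
        obtain ⟨n, hnv⟩ : ∃ n : Fin N, (n : ℕ) = N - 1 - j := ⟨⟨N - 1 - j, by omega⟩, rfl⟩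
        have hsv : n.succ = (⟨N - j, by omega⟩ : Fin (N + 1)) := by
          ext; simp [Fin.val_succ, hnv]; omega
        have hYs : Y' n.succ = A (N - (n : ℕ) - 1) := by
          rw [hsv]
          have hj' : N - (n : ℕ) - 1 = j := by omega
          rw [hj']
          exact ih (by omega)
        funext ω
        have hcore := (core n hYs ω).1
        have hcs : n.castSucc = (⟨N - (j + 1), by omega⟩ : Fin (N + 1)) := by
          ext; simp [Fin.coe_castSucc, hnv]; omega
        rw [hcs] at hcore
        have hNn : N - (n : ℕ) = j + 1 := by omega
        rw [hNn] at hcore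
        exact hcore
    refine Prod.ext ?_ ?_
    · funext m
      have hm := m.isLt
      have h1 := coreY (N - (m : ℕ)) (by omega)
      have h2 : (⟨N - (N - (m : ℕ)), by omega⟩ : Fin (N + 1)) = m := by
        ext; simp; omega
      rw [h2] at h1
      exact h1
    · funext n ω
      have hnN := n.isLt
      have h1 := coreY (N - (n : ℕ) - 1) (by omega)
      have h2 : (⟨N - (N - (n : ℕ) - 1), by omega⟩ : Fin (N + 1)) = n.succ := by
        ext; simp [Fin.val_succ]; omega
      rw [h2] at h1
      exact (core n h1 ω).2
end
end

section
/- With g_n(z) = -(1/γ) log( Σ_{j=0}^d e^{-γ z^T v_j} P̂_{n,j} ) for a constant γ > 0 and a Δ_d-valued predictable process {P̂_n}, the solution of the BSΔE ΔY_n = -g_n(Z_n) + Z_n^T ΔX_n with terminal condition Y, satisfies Y_n = -(1/γ) log Ê[ e^{-γ Y} | F_n ] for n = 0,...,N, where Ê is expectation under the measure P̂ associated with {P̂_n}. -/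
open scoped Classical BigOperators
open Matrix

noncomputable section

lemma agree_update {N d : ℕ} (n : ℕ) (hn : n < N) (j : Fin (d + 1))
    (ω ω' : PathSp N d) :
    agreeOn (n + 1) (Function.update ω ⟨n, hn⟩ j) ω' ↔
      agreeOn n ω ω' ∧ ω' ⟨n, hn⟩ = j := by
  constructor
  · intro h
    refine ⟨fun k hk => ?_, ?_⟩
    · have hkn : k ≠ ⟨n, hn⟩ := by
        intro he; rw [he] at hk; simp at hk
      have := h k (by omega)
      rwa [Function.update_of_ne hkn] at this
    · have := h ⟨n, hn⟩ (by simp)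
      rw [Function.update_self] at this
      exact this.symm
  · rintro ⟨h1, h2⟩ k hk
    by_cases hkn : k = ⟨n, hn⟩
    · subst hkn; rw [Function.update_self, h2]
    · rw [Function.update_of_ne hkn]
      have hne : (k : ℕ) ≠ n := fun he => hkn (Fin.ext he)
      exact h1 k (by omega)

lemma cyl_decomp {N d : ℕ} (P f : PathSp N d → ℝ) (n : ℕ) (hn : n < N)
    (ω : PathSp N d) :
    cylSum P n f ω
      = ∑ j : Fin (d + 1), cylSum P (n + 1) f (Function.update ω ⟨n, hn⟩ j) := by
  unfold cylSum
  rw [Finset.sum_comm]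
  apply Finset.sum_congr rfl
  intro ω' _
  by_cases h : agreeOn n ω ω'
  · rw [if_pos h]
    have : ∀ j : Fin (d + 1),
        (if agreeOn (n + 1) (Function.update ω ⟨n, hn⟩ j) ω' then P ω' * f ω' else 0)
          = if ω' ⟨n, hn⟩ = j then P ω' * f ω' else 0 := by
      intro j
      simp only [agree_update n hn j ω ω', h, true_and]
    rw [Finset.sum_congr rfl (fun j _ => this j)]
    simp
  · rw [if_neg h]
    symm
    apply Finset.sum_eq_zero
    intro j _
    rw [if_neg]
    rw [agree_update n hn j ω ω']
    tauto

lemma agree_full {N d : ℕ} (ω ω' : PathSp N d) :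
    agreeOn N ω ω' ↔ ω' = ω := by
  constructor
  · intro h; funext k; exact (h k k.isLt).symm
  · intro h; subst h; intro k _; rfl

lemma cyl_last {N d : ℕ} (P f : PathSp N d → ℝ) (ω : PathSp N d) :
    cylSum P N f ω = P ω * f ω := by
  unfold cylSum
  have h : ∀ ω', (if agreeOn N ω ω' then P ω' * f ω' else 0)
      = if ω' = ω then P ω' * f ω' else 0 := fun ω' => by
    simp [agree_full ω ω']
  rw [Finset.sum_congr rfl fun ω' _ => h ω']
  rw [Finset.sum_ite_eq' Finset.univ ω (fun ω' => P ω' * f ω')]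
  simp

/-- with the entropic driver
`g_n(z) = -(1/γ) log Σ_j e^{-γ zᵀ v_j} P̂_{n,j}`, the BSΔE solution is
`Y_n = -(1/γ) log Ê[e^{-γ Y} | F_n]` under the measure `P̂` associated with the
predictable simplex-valued process `{P̂_n}` (whose path mass is `∏_n P̂_{n, ω_n}`),
wherever the conditional expectation is defined. -/
theorem stmt8 (N d : ℕ) (v : Fin d → (Fin d → ℝ)) (hv : LinearIndependent ℝ v)
    (hspan : Submodule.span ℝ (Set.range v) = ⊤)
    (w : Fin (d + 1) → (Fin d → ℝ))
    (hw0 : w 0 = -(∑ k, v k)) (hws : ∀ k : Fin d, w k.succ = v k)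
    (γ : ℝ) (hγ : 0 < γ)
    (Phat : Fin N → PathSp N d → Fin (d + 1) → ℝ)
    (hpred : ∀ n : Fin N, MeasUpTo (n : ℕ) (Phat n))
    (hsimplex : ∀ n ω, (∀ j, 0 ≤ Phat n ω j) ∧ ∑ j, Phat n ω j = 1)
    (g : Fin N → PathSp N d → (Fin d → ℝ) → ℝ)
    (hgdef : ∀ n ω z, g n ω z
      = -(1 / γ) * Real.log (∑ j, Real.exp (-(γ * ∑ k, z k * w j k)) * Phat n ω j))
    (Pm : PathSp N d → ℝ) (hPm : ∀ ω, Pm ω = ∏ n, Phat n ω (ω n))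
    (Yterm : PathSp N d → ℝ)
    (Y : Fin (N + 1) → PathSp N d → ℝ) (Z : Fin N → PathSp N d → (Fin d → ℝ))
    (hYad : ∀ n : Fin (N + 1), MeasUpTo (n : ℕ) (Y n))
    (hZpred : ∀ n : Fin N, MeasUpTo (n : ℕ) (Z n))
    (hterm : Y (Fin.last N) = Yterm)
    (heq : ∀ (n : Fin N) (ω : PathSp N d),
      Y n.succ ω - Y n.castSucc ω
        = -(g n ω (Z n ω)) + ∑ k, Z n ω k * w (ω n) k) :
    ∀ (n : Fin (N + 1)) (ω : PathSp N d),
      0 < cylSum Pm (n : ℕ) (fun _ => 1) ω →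
      Y n ω = -(1 / γ) * Real.log
        (cExp Pm (n : ℕ) (fun ω' => Real.exp (-(γ * Yterm ω'))) ω) := by
  -- auxiliary: update doesn't change low coordinates
  have hagree_upd : ∀ (n : ℕ) (hn : n < N) (j : Fin (d + 1)) (ω : PathSp N d),
      agreeOn n ω (Function.update ω ⟨n, hn⟩ j) := by
    intro n hn j ω k hk
    rw [Function.update_of_ne]
    intro he; rw [he] at hk; simp at hk
  have hagree_upd' : ∀ (n : ℕ) (hn : n < N) (j : Fin (d + 1)) (ω : PathSp N d),
      agreeOn n (Function.update ω ⟨n, hn⟩ j) ω := by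
    intro n hn j ω k hk
    rw [Function.update_of_ne]
    intro he; rw [he] at hk; simp at hk
  -- product-splitting lemma
  have prodsplit : ∀ (n : ℕ) (hn : n < N) (j : Fin (d + 1)) (ω : PathSp N d),
      (∏ m : Fin N, if (m : ℕ) < n + 1 then
          Phat m (Function.update ω ⟨n, hn⟩ j) ((Function.update ω ⟨n, hn⟩ j) m) else 1)
        = Phat ⟨n, hn⟩ ω j *
          ∏ m : Fin N, if (m : ℕ) < n then Phat m ω (ω m) else 1 := by
    intro n hn j ω
    set nf : Fin N := ⟨n, hn⟩ with hnf
    set ωj : PathSp N d := Function.update ω nf j with hωj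
    have h1 : (∏ m : Fin N, if (m : ℕ) < n + 1 then Phat m ωj (ωj m) else 1)
        = (if (nf : ℕ) < n + 1 then Phat nf ωj (ωj nf) else 1) *
          ∏ m ∈ Finset.univ.erase nf,
            (if (m : ℕ) < n + 1 then Phat m ωj (ωj m) else 1) :=
      (Finset.mul_prod_erase Finset.univ _ (Finset.mem_univ nf)).symm
    rw [h1]
    have h2 : (if (nf : ℕ) < n + 1 then Phat nf ωj (ωj nf) else 1) = Phat nf ω j := by
      rw [if_pos (by simp [hnf])]
      rw [hωj, Function.update_self]
      rw [hpred nf ωj ω (hagree_upd' n hn j ω)]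
    rw [h2]
    congr 1
    have h3 : ∀ m ∈ Finset.univ.erase nf,
        (if (m : ℕ) < n + 1 then Phat m ωj (ωj m) else 1)
          = (if (m : ℕ) < n then Phat m ω (ω m) else 1) := by
      intro m hm
      have hmn : m ≠ nf := (Finset.mem_erase.mp hm).1
      have hval : (m : ℕ) ≠ n := fun he => hmn (Fin.ext he)
      by_cases hlt : (m : ℕ) < n
      · rw [if_pos (by omega), if_pos hlt]
        have hPP : Phat m ωj = Phat m ω := by
          apply hpred m
          intro k hk
          rw [hωj, Function.update_of_ne]
          intro he
          have : (k : ℕ) = n := by rw [he]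
          omega
        rw [hPP, hωj, Function.update_of_ne hmn]
      · rw [if_neg (by omega), if_neg hlt]
    rw [Finset.prod_congr rfl h3]
    apply Finset.prod_erase
    rw [if_neg (by simp [hnf])]
  -- cylSum of the constant 1 is the partial product
  have lem2 : ∀ (m n : ℕ), n ≤ N → N - n ≤ m → ∀ ω : PathSp N d,
      cylSum Pm n (fun _ => 1) ω
        = ∏ k : Fin N, if (k : ℕ) < n then Phat k ω (ω k) else 1 := by
    intro m
    induction m with
    | zero =>
      intro n hn hm ω
      have hNn : n = N := by omega
      subst hNn
      rw [cyl_last Pm (fun _ => 1) ω, hPm ω, mul_one]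
      exact (Finset.prod_congr rfl fun k _ => (if_pos k.isLt)).symm
    | succ m ih =>
      intro n hn hm ω
      rcases Nat.lt_or_ge n N with hlt | hge
      · rw [cyl_decomp Pm (fun _ => 1) n hlt ω]
        have hterms : ∀ j : Fin (d + 1),
            cylSum Pm (n + 1) (fun _ => 1) (Function.update ω ⟨n, hlt⟩ j)
              = Phat ⟨n, hlt⟩ ω j *
                ∏ k : Fin N, if (k : ℕ) < n then Phat k ω (ω k) else 1 := by
          intro j
          rw [ih (n + 1) (by omega) (by omega) (Function.update ω ⟨n, hlt⟩ j)]
          exact prodsplit n hlt j ω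
        rw [Finset.sum_congr rfl (fun j _ => hterms j)]
        rw [← Finset.sum_mul, (hsimplex ⟨n, hlt⟩ ω).2, one_mul]
      · exact ih n hn (by omega) ω
  -- key martingale identity
  have key : ∀ (m n : ℕ) (hn : n ≤ N), N - n ≤ m → ∀ ω : PathSp N d,
      cylSum Pm n (fun ω' => Real.exp (-(γ * Yterm ω'))) ω
        = Real.exp (-(γ * Y ⟨n, Nat.lt_succ_of_le hn⟩ ω)) *
          cylSum Pm n (fun _ => 1) ω := by
    intro m
    induction m with
    | zero =>
      intro n hn hm ω
      have hNn : n = N := by omega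
      subst hNn
      have hYN : Y ⟨n, Nat.lt_succ_of_le hn⟩ ω = Yterm ω := congrFun hterm ω
      rw [hYN, cyl_last Pm (fun ω' => Real.exp (-(γ * Yterm ω'))) ω,
        cyl_last Pm (fun _ => 1) ω]
      ring
    | succ m ih =>
      intro n hn hm ω
      rcases Nat.lt_or_ge n N with hlt | hge
      · set nf : Fin N := ⟨n, hlt⟩ with hnf
        have hcast : (⟨n, Nat.lt_succ_of_le hn⟩ : Fin (N + 1)) = nf.castSucc := rfl
        -- abbreviations
        set G : ℝ := g nf ω (Z nf ω) with hG
        set S : ℝ := ∑ j, Real.exp (-(γ * ∑ k, Z nf ω k * w j k)) * Phat nf ω j with hS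
        have hSpos : 0 < S := by
          obtain ⟨j0, hj0⟩ : ∃ j0, 0 < Phat nf ω j0 := by
            by_contra hcon
            push_neg at hcon
            have hz : ∀ j, Phat nf ω j = 0 := fun j =>
              le_antisymm (hcon j) ((hsimplex nf ω).1 j)
            have := (hsimplex nf ω).2
            simp [hz] at this
          refine Finset.sum_pos' (fun j _ => ?_)
            ⟨j0, Finset.mem_univ j0, mul_pos (Real.exp_pos _) hj0⟩
          exact mul_nonneg (Real.exp_pos _).le ((hsimplex nf ω).1 j)
        have hGS : Real.exp (γ * G) = S⁻¹ := by
          rw [hG, hgdef]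
          have : γ * (-(1 / γ) * Real.log S) = -Real.log S := by
            field_simp
          rw [← hS, this, Real.exp_neg, Real.exp_log hSpos]
        -- value of Y at the next step on the updated path
        have hYstep : ∀ j : Fin (d + 1),
            Y nf.succ (Function.update ω nf j)
              = Y nf.castSucc ω + (-G + ∑ k, Z nf ω k * w j k) := by
          intro j
          set ωj : PathSp N d := Function.update ω nf j with hωjdef
          have h1 := heq nf ωj
          have hωjn : ωj nf = j := Function.update_self _ _ _
          have hagA : agreeOn n ω ωj := hagree_upd n hlt j ω
          have hagB : agreeOn n ωj ω := hagree_upd' n hlt j ω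
          have hYc : Y nf.castSucc ωj = Y nf.castSucc ω := hYad nf.castSucc ωj ω hagB
          have hZj : Z nf ωj = Z nf ω := hZpred nf ωj ω hagB
          have hgj : g nf ωj (Z nf ωj) = G := by
            rw [hG, hgdef, hgdef, hZj, hpred nf ωj ω hagB]
          rw [hωjn, hgj, hYc, hZj] at h1
          linarith
        -- decompose and compute
        rw [cyl_decomp Pm _ n hlt ω]
        have hterms : ∀ j : Fin (d + 1),
            cylSum Pm (n + 1) (fun ω' => Real.exp (-(γ * Yterm ω')))
                (Function.update ω nf j)
              = (Real.exp (-(γ * Y nf.castSucc ω)) * Real.exp (γ * G) *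
                  Real.exp (-(γ * ∑ k, Z nf ω k * w j k))) *
                (Phat nf ω j * cylSum Pm n (fun _ => 1) ω) := by
          intro j
          have hIH := ih (n + 1) (by omega) (by omega) (Function.update ω nf j)
          have hsucceq : (⟨n + 1, Nat.lt_succ_of_le (by omega)⟩ : Fin (N + 1))
              = nf.succ := rfl
          rw [hsucceq] at hIH
          rw [hIH, hYstep j]
          have hone : cylSum Pm (n + 1) (fun _ => 1) (Function.update ω nf j)
              = Phat nf ω j * cylSum Pm n (fun _ => 1) ω := by
            rw [lem2 (N - (n + 1)) (n + 1) (by omega) (by omega),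
              lem2 (N - n) n hn (by omega), prodsplit n hlt j ω]
          rw [hone]
          congr 1
          rw [← Real.exp_add, ← Real.exp_add]
          congr 1
          ring
        rw [Finset.sum_congr rfl (fun j _ => hterms j)]
        have hsum : ∑ j : Fin (d + 1),
            (Real.exp (-(γ * Y nf.castSucc ω)) * Real.exp (γ * G) *
              Real.exp (-(γ * ∑ k, Z nf ω k * w j k))) *
            (Phat nf ω j * cylSum Pm n (fun _ => 1) ω)
              = Real.exp (-(γ * Y nf.castSucc ω)) * Real.exp (γ * G) *
                cylSum Pm n (fun _ => 1) ω * S := by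
          rw [hS, Finset.mul_sum]
          apply Finset.sum_congr rfl
          intro j _
          ring
        rw [hsum, hGS, hcast]
        field_simp
      · have h0 := ih n hn (by omega) ω
        exact h0
  -- conclusion
  intro n ω hpos
  have hk := key (N - (n : ℕ)) (n : ℕ) (Fin.is_le n) (le_refl _) ω
  have hnn : (⟨(n : ℕ), Nat.lt_succ_of_le (Fin.is_le n)⟩ : Fin (N + 1)) = n :=
    Fin.ext rfl
  rw [hnn] at hk
  unfold cExp
  rw [hk, mul_div_assoc, div_self (ne_of_gt hpos), mul_one,
    Real.log_exp]
  field_simp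
end
end

section
/- (Nonlinear Feynman–Kac) Suppose g_n(z) = f_n(X_{n-1}, z) and Y_N = h(X_N) for deterministic f_n: L × R^d → R and h: L → R. Define u_N = h and backward-inductively u_{n-1}(x) = u_n(x) + L u_n(x) + f_n(x, (v v^T)^{-1} v N u_n(x)), where L u(x) = (1/(d+1)) Σ_{j=0}^d (u(x+v_j) - u(x)) and N u(x) = (u(x+v_0)-u(x), ..., u(x+v_d)-u(x))^T. Then the unique BSΔE solution satisfies Y_n = u_n(X_n) and Z_{n+1} = (v v^T)^{-1} v N u_{n+1}(X_n). -/
open scoped Classical BigOperators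
open Matrix

noncomputable section

/-- The price process `X_n = Σ_{k < n} v_{ω k}` on the lattice. -/
def Xproc {N d : ℕ} (w : Fin (d + 1) → (Fin d → ℝ)) (n : Fin (N + 1))
    (ω : PathSp N d) : Fin d → ℝ :=
  ∑ k ∈ Finset.univ.filter (fun k : Fin N => (k : ℕ) < (n : ℕ)), w (ω k)

/-- nonlinear Feynman–Kac: with `g_n(z) = f_n(X_{n-1}, z)`,
terminal value `h(X_N)`, and `u_n` defined backward by
`u_{n-1}(x) = u_n(x) + 𝓛 u_n(x) + f_n(x, (v vᵀ)⁻¹ v 𝓝 u_n(x))`,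
the unique BSΔE solution is `Y_n = u_n(X_n)`, `Z_{n+1} = (v vᵀ)⁻¹ v 𝓝 u_{n+1}(X_n)`. -/
theorem stmt10 (N d : ℕ) (v : Fin d → (Fin d → ℝ)) (hv : LinearIndependent ℝ v)
    (hspan : Submodule.span ℝ (Set.range v) = ⊤)
    (w : Fin (d + 1) → (Fin d → ℝ))
    (hw0 : w 0 = -(∑ k, v k)) (hws : ∀ k : Fin d, w k.succ = v k)
    (V : Matrix (Fin d) (Fin (d + 1)) ℝ) (hV : ∀ k i, V k i = w i k)
    (f : Fin N → (Fin d → ℝ) → (Fin d → ℝ) → ℝ) (h : (Fin d → ℝ) → ℝ)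
    (u : Fin (N + 1) → (Fin d → ℝ) → ℝ)
    (huN : u (Fin.last N) = h)
    (hurec : ∀ (n : Fin N) (x : Fin d → ℝ),
      u n.castSucc x = u n.succ x
        + (1 / ((d : ℝ) + 1)) * ∑ j, (u n.succ (x + w j) - u n.succ x)
        + f n x ((V * Vᵀ)⁻¹.mulVec
            (V.mulVec (fun j => u n.succ (x + w j) - u n.succ x))))
    (Y : Fin (N + 1) → PathSp N d → ℝ) (Z : Fin N → PathSp N d → (Fin d → ℝ))
    (hYad : ∀ n : Fin (N + 1), MeasUpTo (n : ℕ) (Y n))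
    (hZpred : ∀ n : Fin N, MeasUpTo (n : ℕ) (Z n))
    (hterm : ∀ ω, Y (Fin.last N) ω = h (Xproc w (Fin.last N) ω))
    (heq : ∀ (n : Fin N) (ω : PathSp N d),
      Y n.succ ω - Y n.castSucc ω
        = -(f n (Xproc w n.castSucc ω) (Z n ω)) + ∑ k, Z n ω k * w (ω n) k) :
    (∀ (n : Fin (N + 1)) (ω : PathSp N d), Y n ω = u n (Xproc w n ω)) ∧
    (∀ (n : Fin N) (ω : PathSp N d),
      Z n ω = (V * Vᵀ)⁻¹.mulVec (V.mulVec
        (fun j => u n.succ (Xproc w n.castSucc ω + w j)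
          - u n.succ (Xproc w n.castSucc ω)))) := by
  -- The columns of `V` sum to zero
  have hwsum : ∀ k : Fin d, (∑ i : Fin (d+1), w i k) = 0 := by
    intro k
    have hsum : (∑ i : Fin (d+1), w i) = 0 := by
      rw [Fin.sum_univ_succ, hw0]
      simp [hws]
    calc (∑ i : Fin (d+1), w i k) = (∑ i : Fin (d+1), w i) k := by
          simp [Finset.sum_apply]
      _ = 0 := by rw [hsum]; rfl
  -- `V * Vᵀ` is invertible
  have hdet : IsUnit (V * Vᵀ).det := by
    rw [isUnit_iff_ne_zero]
    intro h0
    obtain ⟨x, hx0, hx⟩ := (Matrix.exists_mulVec_eq_zero_iff).2 h0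
    have h1 : Vᵀ.mulVec x ⬝ᵥ Vᵀ.mulVec x = 0 := by
      have : x ⬝ᵥ ((V * Vᵀ).mulVec x) = 0 := by rw [hx]; simp
      rw [← Matrix.mulVec_mulVec, Matrix.dotProduct_mulVec,
        ← Matrix.mulVec_transpose] at this
      exact this
    have h2 : ∀ i, (Vᵀ.mulVec x) i = 0 := by
      intro i
      have := (Finset.sum_eq_zero_iff_of_nonneg
        (fun i _ => mul_self_nonneg ((Vᵀ.mulVec x) i))).1 h1 i (Finset.mem_univ i)
      exact mul_self_eq_zero.1 this
    have h3 : ∀ k : Fin d, (∑ m, x m * v k m) = 0 := by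
      intro k
      have := h2 k.succ
      simp only [Matrix.mulVec, dotProduct, Matrix.transpose_apply, hV,
        hws] at this
      rw [← this]
      exact Finset.sum_congr rfl fun m _ => mul_comm _ _
    let φ : (Fin d → ℝ) →ₗ[ℝ] ℝ :=
      { toFun := fun y => ∑ m, x m * y m
        map_add' := by intro y z; simp [mul_add, Finset.sum_add_distrib]
        map_smul' := by
          intro c y
          simp [Finset.mul_sum]
          exact Finset.sum_congr rfl fun m _ => by ring }
    have hker : Submodule.span ℝ (Set.range v) ≤ LinearMap.ker φ := by
      rw [Submodule.span_le]
      rintro _ ⟨k, rfl⟩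
      exact h3 k
    have hx2 : φ x = 0 := hker (hspan ▸ Submodule.mem_top)
    have : ∀ m, x m = 0 := by
      intro m
      have := (Finset.sum_eq_zero_iff_of_nonneg
        (fun m _ => mul_self_nonneg (x m))).1 hx2 m (Finset.mem_univ m)
      exact mul_self_eq_zero.1 this
    exact hx0 (funext this)
  -- Key backward step
  have key : ∀ n : Fin N, (∀ ω, Y n.succ ω = u n.succ (Xproc w n.succ ω)) →
      ∀ ω : PathSp N d,
        (Z n ω = (V * Vᵀ)⁻¹.mulVec (V.mulVec
          (fun j => u n.succ (Xproc w n.castSucc ω + w j)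
            - u n.succ (Xproc w n.castSucc ω)))) ∧
        Y n.castSucc ω = u n.castSucc (Xproc w n.castSucc ω) := by
    intro n IH ω
    set x : Fin d → ℝ := Xproc w n.castSucc ω with hxdef
    have hag : ∀ j : Fin (d+1), agreeOn (n : ℕ) ω (Function.update ω n j) := by
      intro j k hk
      rw [Function.update_of_ne]
      exact fun hkn => absurd hk (by simp [hkn])
    have hXc : ∀ j : Fin (d+1),
        Xproc w n.castSucc (Function.update ω n j) = x := by
      intro j
      unfold Xproc
      refine Finset.sum_congr rfl fun k hk => ?_
      simp only [Finset.mem_filter] at hk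
      rw [Function.update_of_ne]
      exact fun hkn => absurd hk.2 (by simp [hkn, Fin.coe_castSucc])
    have hfilt : (Finset.univ.filter
          (fun k : Fin N => (k : ℕ) < ((n.succ : Fin (N+1)) : ℕ)))
        = insert n (Finset.univ.filter
          (fun k : Fin N => (k : ℕ) < ((n.castSucc : Fin (N+1)) : ℕ))) := by
      ext k
      simp [Fin.ext_iff]
      omega
    have hnmem : n ∉ Finset.univ.filter
        (fun k : Fin N => (k : ℕ) < ((n.castSucc : Fin (N+1)) : ℕ)) := by
      simp
    have hXs : ∀ j : Fin (d+1),
        Xproc w n.succ (Function.update ω n j) = x + w j := by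
      intro j
      unfold Xproc
      rw [hfilt, Finset.sum_insert hnmem, Function.update_self]
      have h5 : (∑ k ∈ Finset.univ.filter
            (fun k : Fin N => (k : ℕ) < ((n.castSucc : Fin (N+1)) : ℕ)),
          w ((Function.update ω n j) k)) = x := hXc j
      rw [h5]
      exact add_comm _ _
    set Zv : Fin d → ℝ := Z n ω with hZvdef
    have E : ∀ j : Fin (d+1),
        u n.succ (x + w j) - Y n.castSucc ω
          = -(f n x Zv) + ∑ k, Zv k * w j k := by
      intro j
      have hh := heq n (Function.update ω n j)
      rw [IH (Function.update ω n j), hXs j, hXc j,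
        hYad n.castSucc _ _ (fun k hk => (hag j k (by simpa using hk)).symm),
        hZpred n _ _ (fun k hk => (hag j k hk).symm),
        Function.update_self] at hh
      exact hh
    set a : Fin (d+1) → ℝ :=
      fun j => u n.succ (x + w j) - u n.succ x with hadef
    set C : ℝ := Y n.castSucc ω - u n.succ x - f n x Zv with hCdef
    have hEC : ∀ j, a j = (∑ k, Zv k * w j k) + C := by
      intro j
      have := E j
      simp only [hadef, hCdef]
      linarith
    have hVT0 : (∑ j : Fin (d+1), ∑ k, Zv k * w j k) = 0 := by
      rw [Finset.sum_comm]
      refine Finset.sum_eq_zero fun k _ => ?_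
      rw [← Finset.mul_sum, hwsum k, mul_zero]
    have hC : C = (1 / ((d : ℝ) + 1)) * ∑ j, a j := by
      have hsa : (∑ j, a j) = ((d : ℝ) + 1) * C := by
        simp only [hEC]
        rw [Finset.sum_add_distrib, hVT0, zero_add, Finset.sum_const,
          Finset.card_univ, Fintype.card_fin, nsmul_eq_mul]
        push_cast
        ring
      rw [hsa]
      have hd1 : ((d : ℝ) + 1) ≠ 0 := by positivity
      field_simp
    have hVa : V.mulVec a = (V * Vᵀ).mulVec Zv := by
      funext k
      simp only [Matrix.mulVec, dotProduct, Matrix.mul_apply,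
        Matrix.transpose_apply]
      calc (∑ i, V k i * a i)
          = ∑ i, ((∑ m, V k i * (Zv m * w i m)) + V k i * C) := by
            refine Finset.sum_congr rfl fun i _ => ?_
            rw [hEC i, mul_add, Finset.mul_sum]
        _ = (∑ i, ∑ m, V k i * (Zv m * w i m)) + ∑ i, V k i * C := by
            rw [Finset.sum_add_distrib]
        _ = (∑ m, ∑ i, V k i * (Zv m * w i m)) + 0 := by
            rw [Finset.sum_comm]
            congr 1
            calc (∑ i, V k i * C) = (∑ i : Fin (d+1), w i k) * C := by
                  rw [Finset.sum_mul]
                  exact Finset.sum_congr rfl fun i _ => by rw [hV]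
              _ = 0 := by rw [hwsum k, zero_mul]
        _ = ∑ m, (∑ i, V k i * V m i) * Zv m := by
            rw [add_zero]
            refine Finset.sum_congr rfl fun m _ => ?_
            rw [Finset.sum_mul]
            refine Finset.sum_congr rfl fun i _ => ?_
            rw [hV m i]
            ring
    have hZ : Zv = (V * Vᵀ)⁻¹.mulVec (V.mulVec a) := by
      rw [hVa, Matrix.mulVec_mulVec, Matrix.nonsing_inv_mul _ hdet,
        Matrix.one_mulVec]
    refine ⟨hZ, ?_⟩
    have hur := hurec n x
    rw [← hZ, ← hC] at hur
    rw [hur]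
    simp only [hCdef]
    ring
  -- Assemble
  have hY : ∀ (n : Fin (N + 1)) (ω : PathSp N d), Y n ω = u n (Xproc w n ω) := by
    intro n
    induction n using Fin.reverseInduction with
    | last => intro ω; rw [hterm ω, huN]
    | cast n ih => intro ω; exact (key n ih ω).2
  exact ⟨hY, fun n ω => (key n (hY n.succ) ω).1⟩
end
end

section
/- (Comparison theorem) Let Y^{(1)} ≥ Y^{(2)} be F_N-measurable, and g^{(1)}_n ≥ g^{(2)}_n pointwise, with at least one of g^{(1)}, g^{(2)} satisfying the balance condition g_n(z_2) - g_n(z_1) ≥ min_{θ∈Θ} θ^T (z_2 - z_1) for all z_1, z_2. Then E^{(1)}_n(Y^{(1)}) ≥ E^{(2)}_n(Y^{(2)}) for all n = 0,...,N. -/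
open scoped Classical BigOperators
open Matrix

noncomputable section

/-- comparison theorem: if `Y⁽¹⁾ ≥ Y⁽²⁾`, `g⁽¹⁾ ≥ g⁽²⁾` and at least
one of the two drivers satisfies the balance condition
`g_n(z₂) - g_n(z₁) ≥ min_{θ∈Θ} θᵀ(z₂ - z₁)` with `Θ = conv{v_0,...,v_d}`,
then the BSΔE solutions satisfy `Y⁽¹⁾_n ≥ Y⁽²⁾_n` for all `n`. -/
theorem stmt14 (N d : ℕ) (v : Fin d → (Fin d → ℝ)) (hv : LinearIndependent ℝ v)
    (hspan : Submodule.span ℝ (Set.range v) = ⊤)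
    (w : Fin (d + 1) → (Fin d → ℝ))
    (hw0 : w 0 = -(∑ k, v k)) (hws : ∀ k : Fin d, w k.succ = v k)
    (g1 g2 : Fin N → PathSp N d → (Fin d → ℝ) → ℝ)
    (hg1 : ∀ (n : Fin N) (z : Fin d → ℝ), MeasUpTo (n : ℕ) (fun ω => g1 n ω z))
    (hg2 : ∀ (n : Fin N) (z : Fin d → ℝ), MeasUpTo (n : ℕ) (fun ω => g2 n ω z))
    (hg12 : ∀ n ω z, g1 n ω z ≥ g2 n ω z)
    (hbal : (∀ (n : Fin N) (ω : PathSp N d) (z1 z2 : Fin d → ℝ),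
        g1 n ω z2 - g1 n ω z1 ≥ sInf {x : ℝ | ∃ θ ∈ convexHull ℝ (Set.range w),
          x = ∑ k, θ k * (z2 k - z1 k)}) ∨
      (∀ (n : Fin N) (ω : PathSp N d) (z1 z2 : Fin d → ℝ),
        g2 n ω z2 - g2 n ω z1 ≥ sInf {x : ℝ | ∃ θ ∈ convexHull ℝ (Set.range w),
          x = ∑ k, θ k * (z2 k - z1 k)}))
    (Y1term Y2term : PathSp N d → ℝ) (hY12 : ∀ ω, Y1term ω ≥ Y2term ω)
    (Y1 : Fin (N + 1) → PathSp N d → ℝ) (Z1 : Fin N → PathSp N d → (Fin d → ℝ))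
    (hY1ad : ∀ n : Fin (N + 1), MeasUpTo (n : ℕ) (Y1 n))
    (hZ1pred : ∀ n : Fin N, MeasUpTo (n : ℕ) (Z1 n))
    (hterm1 : Y1 (Fin.last N) = Y1term)
    (heq1 : ∀ (n : Fin N) (ω : PathSp N d),
      Y1 n.succ ω - Y1 n.castSucc ω
        = -(g1 n ω (Z1 n ω)) + ∑ k, Z1 n ω k * w (ω n) k)
    (Y2 : Fin (N + 1) → PathSp N d → ℝ) (Z2 : Fin N → PathSp N d → (Fin d → ℝ))
    (hY2ad : ∀ n : Fin (N + 1), MeasUpTo (n : ℕ) (Y2 n))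
    (hZ2pred : ∀ n : Fin N, MeasUpTo (n : ℕ) (Z2 n))
    (hterm2 : Y2 (Fin.last N) = Y2term)
    (heq2 : ∀ (n : Fin N) (ω : PathSp N d),
      Y2 n.succ ω - Y2 n.castSucc ω
        = -(g2 n ω (Z2 n ω)) + ∑ k, Z2 n ω k * w (ω n) k) :
    ∀ (n : Fin (N + 1)) (ω : PathSp N d), Y1 n ω ≥ Y2 n ω := by
  intro n
  induction n using Fin.reverseInduction with
  | last => intro ω; rw [hterm1, hterm2]; exact hY12 ω
  | cast n ih =>
    intro ω
    set c : Fin d → ℝ := fun k => Z1 n ω k - Z2 n ω k with hc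
    -- choose the vertex minimizing the linear functional θ ↦ ∑ θ k * c k
    obtain ⟨j, -, hj⟩ := Finset.exists_min_image (Finset.univ : Finset (Fin (d + 1)))
      (fun i => ∑ k, w i k * c k) ⟨0, Finset.mem_univ 0⟩
    set ω' : PathSp N d := Function.update ω n j with hω'
    have hag : agreeOn (n : ℕ) ω ω' := by
      intro k hk
      have hkn : k ≠ n := by
        intro h; rw [h] at hk; exact lt_irrefl _ hk
      simp [hω', Function.update_of_ne hkn]
    have hω'n : ω' n = j := by simp [hω']
    -- the linear functional is bounded below on the convex hull by its min over vertices
    have hlin : IsLinearMap ℝ (fun θ : Fin d → ℝ => ∑ k, θ k * c k) := by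
      constructor
      · intro x y; simp [add_mul, Finset.sum_add_distrib]
      · intro a x; simp [Finset.mul_sum, mul_assoc]
    have hhull : convexHull ℝ (Set.range w) ⊆
        {θ : Fin d → ℝ | ∑ k, w j k * c k ≤ ∑ k, θ k * c k} := by
      apply convexHull_min
      · rintro θ ⟨i, rfl⟩
        exact hj i (Finset.mem_univ i)
      · exact convex_halfSpace_ge hlin _
    set S : Set ℝ := {x : ℝ | ∃ θ ∈ convexHull ℝ (Set.range w),
      x = ∑ k, θ k * (Z1 n ω k - Z2 n ω k)} with hS
    have hSne : S.Nonempty := by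
      exact ⟨∑ k, w j k * c k, w j, subset_convexHull ℝ _ ⟨j, rfl⟩, rfl⟩
    have hSlb : ∀ x ∈ S, ∑ k, w j k * c k ≤ x := by
      rintro x ⟨θ, hθ, rfl⟩
      exact hhull hθ
    have hsInf : sInf S ≥ ∑ k, w j k * c k := le_csInf hSne hSlb
    -- key driver inequality
    have hkey : g1 n ω (Z1 n ω) - g2 n ω (Z2 n ω) ≥ ∑ k, w j k * c k := by
      rcases hbal with hb | hb
      · have h1 := hb n ω (Z2 n ω) (Z1 n ω)
        have h2 := hg12 n ω (Z2 n ω)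
        have : sInf S ≥ ∑ k, w j k * c k := hsInf
        rw [← hS] at h1
        linarith
      · have h1 := hb n ω (Z2 n ω) (Z1 n ω)
        have h2 := hg12 n ω (Z1 n ω)
        rw [← hS] at h1
        linarith
    -- transfer via measurability
    have hZ1' : Z1 n ω' = Z1 n ω := (hZ1pred n ω ω' hag).symm
    have hZ2' : Z2 n ω' = Z2 n ω := (hZ2pred n ω ω' hag).symm
    have hg1' : g1 n ω' (Z1 n ω) = g1 n ω (Z1 n ω) := (hg1 n (Z1 n ω) ω ω' hag).symm
    have hg2' : g2 n ω' (Z2 n ω) = g2 n ω (Z2 n ω) := (hg2 n (Z2 n ω) ω ω' hag).symm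
    have hcs : ((n.castSucc : Fin (N + 1)) : ℕ) = (n : ℕ) := Fin.coe_castSucc n
    have hY1' : Y1 n.castSucc ω = Y1 n.castSucc ω' := by
      have := hY1ad n.castSucc
      rw [hcs] at this
      exact this ω ω' hag
    have hY2' : Y2 n.castSucc ω = Y2 n.castSucc ω' := by
      have := hY2ad n.castSucc
      rw [hcs] at this
      exact this ω ω' hag
    have he1 := heq1 n ω'
    have he2 := heq2 n ω'
    rw [hZ1', hg1', hω'n, ← hY1'] at he1
    rw [hZ2', hg2', hω'n, ← hY2'] at he2
    have hih := ih ω'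
    have hsum : ∑ k, Z1 n ω k * w j k - ∑ k, Z2 n ω k * w j k = ∑ k, w j k * c k := by
      rw [← Finset.sum_sub_distrib]
      apply Finset.sum_congr rfl
      intro k _
      simp [hc]; ring
    have : Y1 n.castSucc ω - Y2 n.castSucc ω
        = (Y1 n.succ ω' - Y2 n.succ ω')
          + (g1 n ω (Z1 n ω) - g2 n ω (Z2 n ω))
          - (∑ k, Z1 n ω k * w j k - ∑ k, Z2 n ω k * w j k) := by
      linarith
    rw [hsum] at this
    have : Y1 n.castSucc ω - Y2 n.castSucc ω ≥ 0 := by linarith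
    linarith
end
end

section
/- (Sup-convolution of entropic drivers) Let α, β > 0, γ = 1/(1/α + 1/β), p_j, q_j > 0 for j = 0,...,d, and z ∈ R^d. Then sup over x ∈ R^d of [ -(1/α) log Σ_j e^{-α x^T v_j} p_j - (1/β) log Σ_j e^{-β (z-x)^T v_j} q_j ] equals -(1/γ) log Σ_j e^{-γ z^T v_j} p_j^{γ/α} q_j^{γ/β}. -/
lemma holder_sum {n : ℕ} (A B : Fin n → ℝ) (hA : ∀ j, 0 < A j) (hB : ∀ j, 0 < B j)
    {θ η : ℝ} (hθ : 0 ≤ θ) (hη : 0 ≤ η) (hsum : θ + η = 1)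
    (hSA : 0 < ∑ j, A j) (hSB : 0 < ∑ j, B j) :
    ∑ j, A j ^ θ * B j ^ η ≤ (∑ j, A j) ^ θ * (∑ j, B j) ^ η := by
  set SA := ∑ j, A j with hSAdef
  set SB := ∑ j, B j with hSBdef
  have key : ∀ j, A j ^ θ * B j ^ η ≤ SA ^ θ * SB ^ η * (θ * (A j / SA) + η * (B j / SB)) := by
    intro j
    have h1 : A j ^ θ * B j ^ η = SA ^ θ * SB ^ η * ((A j / SA) ^ θ * (B j / SB) ^ η) := by
      rw [Real.div_rpow (hA j).le hSA.le, Real.div_rpow (hB j).le hSB.le]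
      field_simp
    rw [h1]
    exact mul_le_mul_of_nonneg_left
      (Real.geom_mean_le_arith_mean2_weighted hθ hη (div_pos (hA j) hSA).le (div_pos (hB j) hSB).le hsum)
      (by positivity)
  calc ∑ j, A j ^ θ * B j ^ η
      ≤ ∑ j, SA ^ θ * SB ^ η * (θ * (A j / SA) + η * (B j / SB)) :=
        Finset.sum_le_sum fun j _ => key j
    _ = SA ^ θ * SB ^ η := by
        rw [← Finset.mul_sum]
        have : ∑ j, (θ * (A j / SA) + η * (B j / SB)) = 1 := by
          rw [Finset.sum_add_distrib]
          simp_rw [div_eq_mul_inv, ← Finset.mul_sum, ← Finset.sum_mul]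
          rw [← hSAdef, ← hSBdef]
          field_simp
          linarith
        rw [this, mul_one]

lemma exists_dot {d : ℕ} (v : Fin d → (Fin d → ℝ))
    (hspan : Submodule.span ℝ (Set.range v) = ⊤) (c : Fin d → ℝ) :
    ∃ x : Fin d → ℝ, ∀ j, ∑ k, x k * v j k = c j := by
  let T : (Fin d → ℝ) →ₗ[ℝ] (Fin d → ℝ) :=
    { toFun := fun x j => ∑ k, x k * v j k
      map_add' := by
        intro x y; funext j; simp [add_mul, Finset.sum_add_distrib]
      map_smul' := by
        intro r x; funext j; simp [Finset.mul_sum, mul_assoc] }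
  have hinj : Function.Injective T := by
    rw [← LinearMap.ker_eq_bot, Submodule.eq_bot_iff]
    intro x hx
    have hx' : ∀ j, ∑ k, x k * v j k = 0 := fun j => congrFun hx j
    let φ : (Fin d → ℝ) →ₗ[ℝ] ℝ :=
      { toFun := fun y => ∑ k, x k * y k
        map_add' := by intro a b; simp [mul_add, Finset.sum_add_distrib]
        map_smul' := by intro r a; simp [Finset.mul_sum]; exact Finset.sum_congr rfl fun i _ => by ring }
    have hφ : ∀ y, φ y = 0 := by
      intro y
      have hy : y ∈ Submodule.span ℝ (Set.range v) := by rw [hspan]; trivial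
      induction hy using Submodule.span_induction with
      | mem u hu => obtain ⟨j, rfl⟩ := hu; exact hx' j
      | zero => simp
      | add a b _ _ ha hb => rw [map_add, ha, hb, add_zero]
      | smul r a _ ha => rw [map_smul, ha, smul_zero]
    have hxx : ∑ k, x k * x k = 0 := hφ x
    funext k
    have h0 := (Finset.sum_eq_zero_iff_of_nonneg (fun i _ => mul_self_nonneg (x i))).1 hxx k
      (Finset.mem_univ k)
    have := mul_self_eq_zero.1 h0
    simpa using this
  have hsurj : Function.Surjective T := LinearMap.injective_iff_surjective.mp hinj
  obtain ⟨x, hx⟩ := hsurj c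
  exact ⟨x, fun j => congrFun hx j⟩

/-- sup-convolution of entropic drivers, Lemma A.1:
`sup_x { -(1/α) log Σ_j e^{-α xᵀv_j} p_j - (1/β) log Σ_j e^{-β (z-x)ᵀv_j} q_j }`
`= -(1/γ) log Σ_j e^{-γ zᵀv_j} p_j^{γ/α} q_j^{γ/β}` with `γ = 1/(1/α + 1/β)`. -/
theorem stmt17 (d : ℕ) (v : Fin d → (Fin d → ℝ)) (hv : LinearIndependent ℝ v)
    (hspan : Submodule.span ℝ (Set.range v) = ⊤)
    (w : Fin (d + 1) → (Fin d → ℝ))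
    (hw0 : w 0 = -(∑ k, v k)) (hws : ∀ k : Fin d, w k.succ = v k)
    (α β γ : ℝ) (hα : 0 < α) (hβ : 0 < β) (hγ : γ = 1 / (1 / α + 1 / β))
    (p q : Fin (d + 1) → ℝ) (hp : ∀ j, 0 < p j) (hq : ∀ j, 0 < q j)
    (z : Fin d → ℝ) :
    sSup (Set.range fun x : Fin d → ℝ =>
        -(1 / α) * Real.log (∑ j, Real.exp (-(α * ∑ k, x k * w j k)) * p j)
          - (1 / β) * Real.log (∑ j, Real.exp (-(β * ∑ k, (z k - x k) * w j k)) * q j))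
      = -(1 / γ) * Real.log
          (∑ j, Real.exp (-(γ * ∑ k, z k * w j k)) * p j ^ (γ / α) * q j ^ (γ / β)) := by
  subst hγ
  set γ : ℝ := 1 / (1 / α + 1 / β) with hγdef
  have hαβ : (0:ℝ) < α + β := by linarith
  have hγpos : 0 < γ := by rw [hγdef]; positivity
  have hθη : γ / α + γ / β = 1 := by
    rw [hγdef]; field_simp
  -- abbreviations
  set s : Fin (d+1) → ℝ := fun j => ∑ k, z k * w j k with hsdef
  set S : ℝ := ∑ j, Real.exp (-(γ * s j)) * p j ^ (γ / α) * q j ^ (γ / β) with hSdef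
  have hSpos : 0 < S := by
    rw [hSdef]
    apply Finset.sum_pos _ Finset.univ_nonempty
    intro j _
    have h1 := Real.exp_pos (-(γ * s j))
    have h2 := Real.rpow_pos_of_pos (hp j) (γ / α)
    have h3 := Real.rpow_pos_of_pos (hq j) (γ / β)
    positivity
  set f : (Fin d → ℝ) → ℝ := fun x =>
      -(1 / α) * Real.log (∑ j, Real.exp (-(α * ∑ k, x k * w j k)) * p j)
        - (1 / β) * Real.log (∑ j, Real.exp (-(β * ∑ k, (z k - x k) * w j k)) * q j) with hfdef
  -- Upper bound via Hölder
  have hub : ∀ x : Fin d → ℝ, f x ≤ -(1 / γ) * Real.log S := by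
    intro x
    set A : Fin (d+1) → ℝ := fun j => Real.exp (-(α * ∑ k, x k * w j k)) * p j with hAdef
    set B : Fin (d+1) → ℝ := fun j => Real.exp (-(β * ∑ k, (z k - x k) * w j k)) * q j with hBdef
    have hApos : ∀ j, 0 < A j := fun j => by
      have := Real.exp_pos (-(α * ∑ k, x k * w j k)); have := hp j; positivity
    have hBpos : ∀ j, 0 < B j := fun j => by
      have := Real.exp_pos (-(β * ∑ k, (z k - x k) * w j k)); have := hq j; positivity
    have hSA : 0 < ∑ j, A j := Finset.sum_pos (fun j _ => hApos j) Finset.univ_nonempty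
    have hSB : 0 < ∑ j, B j := Finset.sum_pos (fun j _ => hBpos j) Finset.univ_nonempty
    have hsub : ∀ j, ∑ k, (z k - x k) * w j k = s j - ∑ k, x k * w j k := by
      intro j
      rw [hsdef, ← Finset.sum_sub_distrib]
      exact Finset.sum_congr rfl fun k _ => by ring
    have hAB : ∀ j, A j ^ (γ / α) * B j ^ (γ / β)
        = Real.exp (-(γ * s j)) * p j ^ (γ / α) * q j ^ (γ / β) := by
      intro j
      rw [hAdef, hBdef]
      simp only []
      rw [Real.mul_rpow (Real.exp_pos _).le (hp j).le,
          Real.mul_rpow (Real.exp_pos _).le (hq j).le,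
          ← Real.exp_mul, ← Real.exp_mul, hsub j]
      rw [show Real.exp (-(α * ∑ k, x k * w j k) * (γ / α)) * p j ^ (γ / α) *
            (Real.exp (-(β * (s j - ∑ k, x k * w j k)) * (γ / β)) * q j ^ (γ / β))
          = Real.exp (-(α * ∑ k, x k * w j k) * (γ / α) + -(β * (s j - ∑ k, x k * w j k)) * (γ / β))
            * p j ^ (γ / α) * q j ^ (γ / β) by rw [Real.exp_add]; ring]
      congr 2
      field_simp
      ring
    have hholder : S ≤ (∑ j, A j) ^ (γ / α) * (∑ j, B j) ^ (γ / β) := by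
      rw [hSdef]
      calc ∑ j, Real.exp (-(γ * s j)) * p j ^ (γ / α) * q j ^ (γ / β)
          = ∑ j, A j ^ (γ / α) * B j ^ (γ / β) := by
            exact Finset.sum_congr rfl fun j _ => (hAB j).symm
        _ ≤ (∑ j, A j) ^ (γ / α) * (∑ j, B j) ^ (γ / β) :=
            holder_sum A B hApos hBpos (by positivity) (by positivity) hθη hSA hSB
    have hlog : Real.log S ≤ (γ / α) * Real.log (∑ j, A j) + (γ / β) * Real.log (∑ j, B j) := by
      calc Real.log S ≤ Real.log ((∑ j, A j) ^ (γ / α) * (∑ j, B j) ^ (γ / β)) :=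
            Real.log_le_log hSpos hholder
        _ = (γ / α) * Real.log (∑ j, A j) + (γ / β) * Real.log (∑ j, B j) := by
            rw [Real.log_mul (by positivity) (by positivity),
                Real.log_rpow hSA, Real.log_rpow hSB]
    have e1 : (1 / γ) * (γ / α) = 1 / α := by field_simp
    have e2 : (1 / γ) * (γ / β) = 1 / β := by field_simp
    have h := mul_le_mul_of_nonneg_left hlog (by positivity : (0:ℝ) ≤ 1 / γ)
    have hgoal : f x = -(1 / α) * Real.log (∑ j, A j) - (1 / β) * Real.log (∑ j, B j) := rfl
    rw [hgoal]
    rw [mul_add, ← mul_assoc, ← mul_assoc, e1, e2] at h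
    linarith [h]
  -- Attainment
  have hcard : (Finset.univ : Finset (Fin d)).card = d := by simp
  set C : ℝ := (∑ j, (Real.log (p j) - Real.log (q j))) / (d + 1) with hCdef
  have hC : ((d : ℝ) + 1) * C = ∑ j, (Real.log (p j) - Real.log (q j)) := by
    rw [hCdef]; field_simp
  set lam : Fin (d+1) → ℝ :=
    fun j => (β * s j + Real.log (p j) - Real.log (q j) - C) / (α + β) with hlamdef
  obtain ⟨x, hx⟩ := exists_dot v hspan (fun k => lam k.succ)
  have hxw : ∀ j, ∑ i, x i * w j i = lam j := by
    intro j
    induction j using Fin.cases with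
    | succ k => rw [hws k]; exact hx k
    | zero =>
      have hw0' : ∀ i, w 0 i = -(∑ k' : Fin d, v k' i) := by
        intro i; rw [hw0]; simp
      have hL : ∑ i, x i * w 0 i = -∑ k' : Fin d, lam k'.succ := by
        calc ∑ i, x i * w 0 i = ∑ i, -(∑ k' : Fin d, x i * v k' i) := by
              refine Finset.sum_congr rfl fun i _ => ?_
              rw [hw0' i, mul_neg, Finset.mul_sum]
          _ = -∑ i, ∑ k' : Fin d, x i * v k' i := by rw [Finset.sum_neg_distrib]
          _ = -∑ k' : Fin d, ∑ i, x i * v k' i := by rw [Finset.sum_comm]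
          _ = -∑ k' : Fin d, lam k'.succ := by
              congr 1; exact Finset.sum_congr rfl fun k' _ => hx k'
      rw [hL]
      -- now a scalar identity
      have hs0 : s 0 = -∑ k' : Fin d, s k'.succ := by
        rw [hsdef]
        simp only []
        calc ∑ k, z k * w 0 k = ∑ k, -(∑ k' : Fin d, z k * v k' k) := by
              refine Finset.sum_congr rfl fun k _ => ?_
              rw [hw0' k, mul_neg, Finset.mul_sum]
          _ = -∑ k' : Fin d, ∑ k, z k * v k' k := by rw [Finset.sum_neg_distrib, Finset.sum_comm]
          _ = -∑ k' : Fin d, s k'.succ := by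
              congr 1
              refine Finset.sum_congr rfl fun k' _ => ?_
              rw [hsdef]; simp only []
              exact Finset.sum_congr rfl fun k _ => by rw [hws k']
      have hab : ∑ j, (Real.log (p j) - Real.log (q j))
          = (Real.log (p 0) - Real.log (q 0)) + ∑ k' : Fin d, (Real.log (p k'.succ) - Real.log (q k'.succ)) :=
        Fin.sum_univ_succ _
      have hsumlam : ∑ k' : Fin d, lam k'.succ
          = (β * (∑ k' : Fin d, s k'.succ) + (∑ k' : Fin d, (Real.log (p k'.succ) - Real.log (q k'.succ)))
              - d * C) / (α + β) := by
        rw [hlamdef]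
        simp only []
        rw [← Finset.sum_div]
        congr 1
        calc ∑ i : Fin d, (β * s i.succ + Real.log (p i.succ) - Real.log (q i.succ) - C)
            = ∑ i : Fin d, (β * s i.succ + (Real.log (p i.succ) - Real.log (q i.succ)) + (-C)) :=
              Finset.sum_congr rfl fun i _ => by ring
          _ = β * (∑ k' : Fin d, s k'.succ)
              + (∑ k' : Fin d, (Real.log (p k'.succ) - Real.log (q k'.succ))) - d * C := by
              rw [Finset.sum_add_distrib, Finset.sum_add_distrib, Finset.sum_const,
                ← Finset.mul_sum]
              simp [hcard]
              ring
      rw [hsumlam, hlamdef]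
      simp only []
      rw [hs0]
      have hsplit : ∑ k' : Fin d, (Real.log (p k'.succ) - Real.log (q k'.succ))
          = (∑ k' : Fin d, Real.log (p k'.succ)) - ∑ k' : Fin d, Real.log (q k'.succ) :=
        Finset.sum_sub_distrib _ _
      field_simp
      linarith [hC, hab, hsplit]
  -- value at x
  have hval : f x = -(1 / γ) * Real.log S := by
    have hsub : ∀ j, ∑ k, (z k - x k) * w j k = s j - lam j := by
      intro j
      rw [← hxw j, hsdef, ← Finset.sum_sub_distrib]
      exact Finset.sum_congr rfl fun k _ => by ring
    have hA : ∀ j, Real.exp (-(α * ∑ k, x k * w j k)) * p j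
        = Real.exp (α * C / (α + β)) * (Real.exp (-(γ * s j)) * p j ^ (γ / α) * q j ^ (γ / β)) := by
      intro j
      rw [hxw j]
      rw [Real.rpow_def_of_pos (hp j), Real.rpow_def_of_pos (hq j)]
      rw [show Real.exp (α * C / (α + β)) *
            (Real.exp (-(γ * s j)) * Real.exp (Real.log (p j) * (γ / α)) *
              Real.exp (Real.log (q j) * (γ / β)))
          = Real.exp (α * C / (α + β) + -(γ * s j) + Real.log (p j) * (γ / α)
              + Real.log (q j) * (γ / β)) by rw [Real.exp_add, Real.exp_add, Real.exp_add]; ring]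
      nth_rewrite 1 [show p j = Real.exp (Real.log (p j)) from (Real.exp_log (hp j)).symm]
      rw [← Real.exp_add]
      congr 1
      rw [hlamdef, hγdef]
      simp only []
      field_simp
      ring
    have hB : ∀ j, Real.exp (-(β * ∑ k, (z k - x k) * w j k)) * q j
        = Real.exp (-(β * C / (α + β))) * (Real.exp (-(γ * s j)) * p j ^ (γ / α) * q j ^ (γ / β)) := by
      intro j
      rw [hsub j]
      rw [Real.rpow_def_of_pos (hp j), Real.rpow_def_of_pos (hq j)]
      rw [show Real.exp (-(β * C / (α + β))) *
            (Real.exp (-(γ * s j)) * Real.exp (Real.log (p j) * (γ / α)) *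
              Real.exp (Real.log (q j) * (γ / β)))
          = Real.exp (-(β * C / (α + β)) + -(γ * s j) + Real.log (p j) * (γ / α)
              + Real.log (q j) * (γ / β)) by rw [Real.exp_add, Real.exp_add, Real.exp_add]; ring]
      nth_rewrite 1 [show q j = Real.exp (Real.log (q j)) from (Real.exp_log (hq j)).symm]
      rw [← Real.exp_add]
      congr 1
      rw [hlamdef, hγdef]
      simp only []
      field_simp
      ring
    have hsumA : (∑ j, Real.exp (-(α * ∑ k, x k * w j k)) * p j)
        = Real.exp (α * C / (α + β)) * S := by
      rw [hSdef, Finset.mul_sum]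
      exact Finset.sum_congr rfl fun j _ => hA j
    have hsumB : (∑ j, Real.exp (-(β * ∑ k, (z k - x k) * w j k)) * q j)
        = Real.exp (-(β * C / (α + β))) * S := by
      rw [hSdef, Finset.mul_sum]
      exact Finset.sum_congr rfl fun j _ => hB j
    rw [hfdef]
    simp only []
    rw [hsumA, hsumB, Real.log_mul (Real.exp_ne_zero _) hSpos.ne',
        Real.log_mul (Real.exp_ne_zero _) hSpos.ne', Real.log_exp, Real.log_exp]
    rw [hγdef]
    field_simp
    ring
  -- conclude
  apply IsGreatest.csSup_eq
  constructor
  · exact ⟨x, hval⟩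
  · rintro y ⟨x', rfl⟩
    exact hub x'
end

section
/- (Exponential-utility maximizer formula) Let G > 0, P̂ = (P̂_0,...,P̂_d) with all P̂_j > 0 and Σ_j P̂_j = 1, and g(z) = -(1/G) log Σ_{j=0}^d e^{-G z^T v_j} P̂_j. Then g attains its maximum over R^d uniquely at Z† = (1/G)(v v^T)^{-1} v log P̂ (componentwise log), and the maximal value satisfies g(Z†) = (1/G) D_KL(Q || P̂) where Q = (1/(d+1),...,1/(d+1)) and D_KL is the Kullback–Leibler divergence on the simplex. -/
open Matrix

/-- exponential-utility maximizer: the entropic driver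
`g(z) = -(1/G) log Σ_j e^{-G zᵀv_j} P̂_j` attains its maximum over `ℝ^d` uniquely
at `Z† = (1/G)(v vᵀ)⁻¹ v log P̂`, with maximal value
`g(Z†) = (1/G) D_KL(Q ‖ P̂)`, `Q` the uniform distribution on `{0,...,d}`. -/
theorem stmt19 (d : ℕ) (v : Fin d → (Fin d → ℝ)) (hv : LinearIndependent ℝ v)
    (hspan : Submodule.span ℝ (Set.range v) = ⊤)
    (w : Fin (d + 1) → (Fin d → ℝ))
    (hw0 : w 0 = -(∑ k, v k)) (hws : ∀ k : Fin d, w k.succ = v k)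
    (V : Matrix (Fin d) (Fin (d + 1)) ℝ) (hV : ∀ k i, V k i = w i k)
    (G : ℝ) (hG : 0 < G)
    (Phat : Fin (d + 1) → ℝ) (hp : ∀ j, 0 < Phat j) (hpsum : ∑ j, Phat j = 1)
    (g : (Fin d → ℝ) → ℝ)
    (hgdef : ∀ z, g z
      = -(1 / G) * Real.log (∑ j, Real.exp (-(G * ∑ k, z k * w j k)) * Phat j))
    (Zd : Fin d → ℝ)
    (hZd : Zd = (1 / G) • ((V * Vᵀ)⁻¹.mulVec (V.mulVec fun j => Real.log (Phat j)))) :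
    (∀ z, g z ≤ g Zd) ∧ (∀ z, g z = g Zd → z = Zd) ∧
      g Zd = (1 / G) * ∑ j, (1 / ((d : ℝ) + 1)) *
        Real.log ((1 / ((d : ℝ) + 1)) / Phat j) := by
  have hd1 : (0:ℝ) < (d:ℝ) + 1 := by positivity
  set L : Fin (d+1) → ℝ := fun j => Real.log (Phat j) with hL
  set m : ℝ := (∑ j, L j) / ((d:ℝ) + 1) with hm
  have hmsum : ∑ j, L j = ((d:ℝ) + 1) * m := by
    rw [hm]; field_simp
  -- perpendicularity lemma
  have hperp : ∀ u : Fin d → ℝ, (∀ k, v k ⬝ᵥ u = 0) → u = 0 := by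
    intro u hu
    have h1 : ∀ x ∈ Submodule.span ℝ (Set.range v), x ⬝ᵥ u = 0 := by
      intro x hx
      induction hx using Submodule.span_induction with
      | mem x hx => obtain ⟨k, rfl⟩ := hx; exact hu k
      | zero => simp
      | add x y _ _ hx hy => rw [add_dotProduct, hx, hy, add_zero]
      | smul c x _ hx => rw [smul_dotProduct, hx, smul_zero]
    have h2 : u ⬝ᵥ u = 0 := h1 u (hspan ▸ Submodule.mem_top)
    exact dotProduct_self_eq_zero.mp h2
  -- sum of the w's is zero
  have hsumw : ∀ i, ∑ j, w j i = 0 := by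
    intro i
    rw [Fin.sum_univ_succ, hw0]
    simp only [Pi.neg_apply, Finset.sum_apply]
    have hss : ∑ k : Fin d, w (Fin.succ k) i = ∑ k : Fin d, v k i :=
      Finset.sum_congr rfl (fun k _ => by rw [hws k])
    rw [hss]
    ring
  -- Vᵀ mulVec formula
  have hVt : ∀ z : Fin d → ℝ, ∀ j, (Vᵀ *ᵥ z) j = w j ⬝ᵥ z := by
    intro z j
    simp only [mulVec, dotProduct, transpose_apply]
    exact Finset.sum_congr rfl (fun k _ => by rw [hV])
  -- kernel of Vᵀ is trivial
  have hVtker : ∀ z : Fin d → ℝ, Vᵀ *ᵥ z = 0 → z = 0 := by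
    intro z hz
    refine hperp z (fun k => ?_)
    have := congr_fun hz (Fin.succ k)
    rw [hVt z (Fin.succ k), hws k] at this
    simpa using this
  -- V * Vᵀ is a unit
  have hA : IsUnit (V * Vᵀ) := by
    rw [← Matrix.mulVec_injective_iff_isUnit]
    intro z1 z2 h
    have h0 : (V * Vᵀ) *ᵥ (z1 - z2) = 0 := by
      rw [Matrix.mulVec_sub, h, sub_self]
    have h1 : (Vᵀ *ᵥ (z1 - z2)) ⬝ᵥ (Vᵀ *ᵥ (z1 - z2)) = 0 := by
      have : (z1 - z2) ⬝ᵥ ((V * Vᵀ) *ᵥ (z1 - z2)) = 0 := by rw [h0]; simp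
      rw [← Matrix.mulVec_mulVec, Matrix.dotProduct_mulVec, ← Matrix.mulVec_transpose] at this
      exact this
    have h2 := hVtker _ (dotProduct_self_eq_zero.mp h1)
    exact sub_eq_zero.mp h2
  -- construct z₀
  have hM : IsUnit (Matrix.of v) := by
    rw [← Matrix.linearIndependent_rows_iff_isUnit]
    exact hv
  obtain ⟨z₀, hz₀⟩ := (Matrix.mulVec_surjective_iff_isUnit.mpr hM)
    (fun k => L (Fin.succ k) - m)
  have hz0 : ∀ k, v k ⬝ᵥ z₀ = L (Fin.succ k) - m := by
    intro k
    have := congr_fun hz₀ k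
    simpa [mulVec, dotProduct] using this
  -- Vᵀ z₀ = L - m 1
  have hVtz0 : ∀ j, w j ⬝ᵥ z₀ = L j - m := by
    intro j
    induction j using Fin.cases with
    | zero =>
      rw [hw0]
      have hsd : (∑ k, v k) ⬝ᵥ z₀ = ∑ k, v k ⬝ᵥ z₀ := by
        simp only [dotProduct, Finset.sum_apply, Finset.sum_mul]
        exact Finset.sum_comm
      rw [neg_dotProduct, hsd]
      rw [Finset.sum_congr rfl (fun k _ => hz0 k)]
      have hs : ∑ k : Fin d, (L (Fin.succ k) - m) = (∑ j, L j) - L 0 - (d:ℝ) * m := by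
        rw [Finset.sum_sub_distrib, Finset.sum_const, Finset.card_univ, Fintype.card_fin,
          nsmul_eq_mul]
        have : ∑ j, L j = L 0 + ∑ k : Fin d, L (Fin.succ k) := Fin.sum_univ_succ L
        rw [this]; ring
      rw [hs, hmsum]; push_cast; ring
    | succ k => rw [hws k]; exact hz0 k
  -- G • Zd = z₀
  have hGZd : G • Zd = z₀ := by
    have hL2 : (fun j => L j) = (Vᵀ *ᵥ z₀) + m • (fun _ => (1:ℝ)) := by
      funext j
      simp only [Pi.add_apply, Pi.smul_apply, smul_eq_mul, mul_one]
      rw [hVt z₀ j, hVtz0 j]; ring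
    have hV1 : V *ᵥ (fun _ => (1:ℝ)) = 0 := by
      funext i
      simp only [mulVec, dotProduct, mul_one, Pi.zero_apply]
      rw [Finset.sum_congr rfl (fun j _ => by rw [hV])]
      exact hsumw i
    have hmul : V *ᵥ (fun j => L j) = (V * Vᵀ) *ᵥ z₀ := by
      rw [hL2, Matrix.mulVec_add, Matrix.mulVec_smul, hV1, smul_zero, add_zero,
        Matrix.mulVec_mulVec]
    rw [hZd, smul_smul, mul_one_div, div_self hG.ne', one_smul]
    rw [hmul, Matrix.mulVec_mulVec, Matrix.nonsing_inv_mul _ ((Matrix.isUnit_iff_isUnit_det _).mp hA),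
      Matrix.one_mulVec]
  have hkey : ∀ j, G * (∑ k, Zd k * w j k) = L j - m := by
    intro j
    have : ∑ k, Zd k * w j k = Zd ⬝ᵥ w j := rfl
    rw [this, ← hVtz0 j, dotProduct_comm (w j) z₀, ← hGZd]
    simp [dotProduct, Finset.mul_sum, mul_assoc]
  -- the reduced objective
  set a : (Fin d → ℝ) → Fin (d+1) → ℝ := fun z j => L j - G * ∑ k, z k * w j k with ha
  have hterm : ∀ z j, Real.exp (-(G * ∑ k, z k * w j k)) * Phat j = Real.exp (a z j) := by
    intro z j
    rw [ha]
    conv_lhs => rw [show Phat j = Real.exp (L j) from (Real.exp_log (hp j)).symm]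
    rw [← Real.exp_add]
    ring_nf
  have hg : ∀ z, g z = -(1/G) * Real.log (∑ j, Real.exp (a z j)) := by
    intro z
    rw [hgdef z]
    congr 1
    exact congrArg Real.log (Finset.sum_congr rfl (fun j _ => hterm z j))
  have hsuma : ∀ z, ∑ j, a z j = ((d:ℝ) + 1) * m := by
    intro z
    rw [ha]
    simp only
    rw [Finset.sum_sub_distrib, hmsum, ← Finset.mul_sum]
    have : ∑ j, ∑ k, z k * w j k = 0 := by
      rw [Finset.sum_comm]
      rw [Finset.sum_congr rfl (fun k _ => by rw [← Finset.mul_sum, hsumw k, mul_zero])]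
      simp
    rw [this, mul_zero, sub_zero]
  have haZd : ∀ j, a Zd j = m := by
    intro j; rw [ha]; simp only; rw [hkey j]; ring
  have hSZd : ∑ j, Real.exp (a Zd j) = ((d:ℝ) + 1) * Real.exp m := by
    rw [Finset.sum_congr rfl (fun j _ => by rw [haZd j])]
    rw [Finset.sum_const, Finset.card_univ, Fintype.card_fin, nsmul_eq_mul]
    push_cast; ring
  have htangent : ∀ z j, Real.exp m * (1 + (a z j - m)) ≤ Real.exp (a z j) := by
    intro z j
    have h1 : (a z j - m) + 1 ≤ Real.exp (a z j - m) := Real.add_one_le_exp _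
    have h2 : Real.exp m * ((a z j - m) + 1) ≤ Real.exp m * Real.exp (a z j - m) :=
      mul_le_mul_of_nonneg_left h1 (Real.exp_pos m).le
    rw [← Real.exp_add] at h2
    calc Real.exp m * (1 + (a z j - m)) = Real.exp m * ((a z j - m) + 1) := by ring
      _ ≤ Real.exp (m + (a z j - m)) := h2
      _ = Real.exp (a z j) := by ring_nf
  have htansum : ∀ z, ∑ j, Real.exp m * (1 + (a z j - m)) = ((d:ℝ) + 1) * Real.exp m := by
    intro z
    rw [← Finset.mul_sum]
    have h1 : ∑ j, (1 + (a z j - m)) = ((d:ℝ) + 1) := by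
      rw [Finset.sum_add_distrib, Finset.sum_sub_distrib, hsuma z, Finset.sum_const,
        Finset.sum_const, Finset.card_univ, Fintype.card_fin, nsmul_eq_mul, nsmul_eq_mul]
      push_cast; ring
    rw [h1]; ring
  have hge : ∀ z, ((d:ℝ) + 1) * Real.exp m ≤ ∑ j, Real.exp (a z j) := by
    intro z
    rw [← htansum z]
    exact Finset.sum_le_sum (fun j _ => htangent z j)
  have hSpos : ∀ z, 0 < ∑ j, Real.exp (a z j) := by
    intro z
    exact Finset.sum_pos (fun j _ => Real.exp_pos _) Finset.univ_nonempty
  have hle : ∀ z, g z ≤ g Zd := by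
    intro z
    rw [hg z, hg Zd, hSZd]
    have hlog : Real.log (((d:ℝ) + 1) * Real.exp m) ≤ Real.log (∑ j, Real.exp (a z j)) :=
      Real.log_le_log (by positivity) (hge z)
    have h1G : (0:ℝ) < 1/G := by positivity
    nlinarith [hlog, h1G]
  refine ⟨hle, ?_, ?_⟩
  · -- uniqueness
    intro z hz
    have hSeq : ∑ j, Real.exp (a z j) = ((d:ℝ) + 1) * Real.exp m := by
      rw [hg z, hg Zd, hSZd] at hz
      have hlogeq : Real.log (∑ j, Real.exp (a z j)) = Real.log (((d:ℝ)+1) * Real.exp m) := by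
        have hGne : (-(1/G) : ℝ) ≠ 0 := by
          simp only [ne_eq, neg_eq_zero]
          positivity
        exact mul_left_cancel₀ hGne hz
      have h := Real.exp_log (hSpos z)
      rw [hlogeq, Real.exp_log (by positivity : (0:ℝ) < ((d:ℝ)+1) * Real.exp m)] at h
      exact h.symm
    have hall : ∀ j, a z j = m := by
      by_contra hcon
      push_neg at hcon
      obtain ⟨j₀, hj₀⟩ := hcon
      have hstrict : ∑ j, Real.exp m * (1 + (a z j - m)) < ∑ j, Real.exp (a z j) := by
        refine Finset.sum_lt_sum (fun j _ => htangent z j) ⟨j₀, Finset.mem_univ j₀, ?_⟩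
        have h1 : (a z j₀ - m) + 1 < Real.exp (a z j₀ - m) :=
          Real.add_one_lt_exp (sub_ne_zero.mpr hj₀)
        have h2 : Real.exp m * ((a z j₀ - m) + 1) < Real.exp m * Real.exp (a z j₀ - m) :=
          (mul_lt_mul_iff_right₀ (Real.exp_pos m)).mpr h1
        rw [← Real.exp_add] at h2
        calc Real.exp m * (1 + (a z j₀ - m)) = Real.exp m * ((a z j₀ - m) + 1) := by ring
          _ < Real.exp (m + (a z j₀ - m)) := h2
          _ = Real.exp (a z j₀) := by ring_nf
      rw [htansum z, hSeq] at hstrict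
      exact lt_irrefl _ hstrict
    -- from all a z j = m conclude z = Zd
    have hdp : ∀ j, ∑ k, z k * w j k = ∑ k, Zd k * w j k := by
      intro j
      have h1 : L j - G * ∑ k, z k * w j k = m := hall j
      have h2 : G * ∑ k, Zd k * w j k = L j - m := hkey j
      have hGne : G ≠ 0 := hG.ne'
      have : G * ∑ k, z k * w j k = G * ∑ k, Zd k * w j k := by
        rw [h2]; linarith
      exact mul_left_cancel₀ hGne this
    have : z - Zd = 0 := by
      refine hperp (z - Zd) (fun k => ?_)
      have := hdp (Fin.succ k)
      rw [hws k] at this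
      simp only [dotProduct, Pi.sub_apply]
      have : ∑ i, (z i - Zd i) * v k i = 0 := by
        rw [Finset.sum_congr rfl (fun i _ => by rw [sub_mul])]
        rw [Finset.sum_sub_distrib, this, sub_self]
      calc ∑ i, v k i * (z i - Zd i) = ∑ i, (z i - Zd i) * v k i :=
            Finset.sum_congr rfl (fun i _ => mul_comm _ _)
        _ = 0 := this
    exact sub_eq_zero.mp this
  · -- value formula
    rw [hg Zd, hSZd]
    rw [Real.log_mul (by positivity) (Real.exp_pos m).ne', Real.log_exp]
    have hrhs : ∑ j, (1 / ((d:ℝ) + 1)) * Real.log ((1 / ((d:ℝ) + 1)) / Phat j)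
        = -(Real.log ((d:ℝ)+1) + m) := by
      have hlogdiv : ∀ j : Fin (d+1), Real.log ((1 / ((d:ℝ) + 1)) / Phat j)
          = -Real.log ((d:ℝ)+1) - L j := by
        intro j
        rw [Real.log_div (by positivity) (hp j).ne', Real.log_div one_ne_zero hd1.ne',
          Real.log_one]
        rw [hL]; ring
      rw [Finset.sum_congr rfl (fun j _ => by rw [hlogdiv j])]
      rw [← Finset.mul_sum, Finset.sum_sub_distrib, hmsum, Finset.sum_const,
        Finset.card_univ, Fintype.card_fin, nsmul_eq_mul]
      push_cast
      field_simp
      ring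
    rw [hrhs]
    field_simp
end
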